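/- For the substitution φ on {1,2} given by φ(1) = 112 and φ(2) = 12, the set I = { (1,1), (12,21), (2,2) } of pairs of words is closed under applying φ to both coordinates and splitting the result into irreducible balanced pairs; specifically, φ applied to (1,1) reduces to (1,1)(2,2), and φ applied to (12,21) reduces to (1,1)(12,21)(1,1)(2,2). Hence the balanced pair algorithm terminates for this substitution. -/
import Mathlib


def subApply {n : ℕ} (φ : Fin n → List (Fin n)) (w : List (Fin n)) : List (Fin n) :=
  w.flatMap φ

/-- A pair of words is balanced if they have the same population vector. -/
def BalancedPair {n : ℕ} (u v : List (Fin n)) : Prop := ∀ i, u.count i = v.count i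

/-- A balanced pair is irreducible if it admits no proper splitting into balanced pairs. -/
def IrredBP {n : ℕ} (u v : List (Fin n)) : Prop :=
  BalancedPair u v ∧ u ≠ [] ∧
    ∀ k, 0 < k → k < u.length → ¬ BalancedPair (u.take k) (v.take k)

/-- `ps` is a reduction of the balanced pair `(u, v)` into irreducible balanced pairs. -/
def Reduction {n : ℕ} (u v : List (Fin n)) (ps : List (List (Fin n) × List (Fin n))) : Prop :=
  (∀ p ∈ ps, IrredBP p.1 p.2) ∧ (ps.map Prod.fst).flatten = u ∧ (ps.map Prod.snd).flatten = v

/-- For `φ(1) = 112`, `φ(2) = 12` (letters `0`,`1` standing for `1`,`2`), the set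
`I = {(1,1), (12,21), (2,2)}` is closed under applying `φ` and splitting into irreducible
balanced pairs; in particular `φ` of `(1,1)` reduces to pairs among `{(1,1),(2,2)}` and
`φ` of `(12,21)` reduces to pairs among `{(1,1),(12,21),(2,2)}`. Hence the balanced pair
algorithm terminates for this substitution. -/
lemma irred_single (a : Fin 2) : IrredBP [a] [a] := by
  refine ⟨fun i => rfl, by simp, fun k hk hk' => ?_⟩
  simp at hk'; omega

lemma irred_0110 : IrredBP ([0,1] : List (Fin 2)) [1,0] := by
  refine ⟨?_, by simp, fun k hk hk' h => ?_⟩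
  · intro i; fin_cases i <;> decide
  · have : k = 1 := by simp at hk'; omega
    subst this
    have := h 0
    simp [List.count] at this

lemma red00 (φ : Fin 2 → List (Fin 2)) (hφ0 : φ 0 = [0, 0, 1]) :
    Reduction (subApply φ [0]) (subApply φ [0])
      [([0],[0]),([0],[0]),([1],[1])] := by
  refine ⟨fun p hp => ?_, ?_, ?_⟩
  · simp at hp; rcases hp with h|h <;> simp [h] <;> exact irred_single _
  · simp [subApply, hφ0]
  · simp [subApply, hφ0]

lemma red01 (φ : Fin 2 → List (Fin 2)) (hφ0 : φ 0 = [0, 0, 1]) (hφ1 : φ 1 = [0, 1]) :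
    Reduction (subApply φ [0,1]) (subApply φ [1,0])
      [([0],[0]),([0,1],[1,0]),([0],[0]),([1],[1])] := by
  refine ⟨fun p hp => ?_, ?_, ?_⟩
  · simp at hp
    rcases hp with h|h|h|h <;> subst h
    exacts [irred_single _, irred_0110, irred_single _, irred_single _]
  · simp [subApply, hφ0, hφ1]
  · simp [subApply, hφ0, hφ1]

lemma red11 (φ : Fin 2 → List (Fin 2)) (hφ1 : φ 1 = [0, 1]) :
    Reduction (subApply φ [1]) (subApply φ [1]) [([0],[0]),([1],[1])] := by
  refine ⟨fun p hp => ?_, ?_, ?_⟩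
  · simp at hp; rcases hp with h|h <;> subst h <;> exact irred_single _
  · simp [subApply, hφ1]
  · simp [subApply, hφ1]

theorem bpa_terminates_example (φ : Fin 2 → List (Fin 2))
    (hφ0 : φ 0 = [0, 0, 1]) (hφ1 : φ 1 = [0, 1]) :
    (∀ pr ∈ ([([0], [0]), ([0, 1], [1, 0]), ([1], [1])] :
        List (List (Fin 2) × List (Fin 2))),
      ∃ ps, Reduction (subApply φ pr.1) (subApply φ pr.2) ps ∧
        ∀ q ∈ ps, q ∈ ([([0], [0]), ([0, 1], [1, 0]), ([1], [1])] :
          List (List (Fin 2) × List (Fin 2)))) ∧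
    (∃ ps, Reduction (subApply φ [0]) (subApply φ [0]) ps ∧
      ∀ q ∈ ps, q = ([0], [0]) ∨ q = ([1], [1])) ∧
    (∃ ps, Reduction (subApply φ [0, 1]) (subApply φ [1, 0]) ps ∧
      ∀ q ∈ ps, q = ([0], [0]) ∨ q = ([0, 1], [1, 0]) ∨ q = ([1], [1])) := by
  refine ⟨fun pr hpr => ?_, ⟨_, red00 φ hφ0, ?_⟩, ⟨_, red01 φ hφ0 hφ1, ?_⟩⟩
  · simp at hpr
    rcases hpr with h|h|h <;> subst h
    · exact ⟨_, red00 φ hφ0, by decide⟩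
    · exact ⟨_, red01 φ hφ0 hφ1, by decide⟩
    · exact ⟨_, red11 φ hφ1, by decide⟩
  · decide
  · decide
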